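/- Let Γ be a finite subgroup of the group of n×n permutation matrices, let x₀ ∈ {0,1}ⁿ, and let O = Orb(x₀, Γ). Suppose the set K = {θ : E(x^{(j)}; θ) − E(x; θ) ≥ 1 for all x ∈ O and all j ∈ {1,…,n}} of Hopfield parameters is nonempty. Then the minimizer θ* of ‖θ‖² = ‖W‖_F² + ‖b‖² over K exists, is unique, and is Γ-invariant: θ* ∈ Ψ(Γ). -/

import Mathlib

open scoped BigOperators
open scoped Classical
open Matrix MeasureTheory

namespace HopfieldPaper

/-- The space of (not necessarily admissible) Hopfield parameters `θ = (W, b)`. -/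
abbrev Param (n : ℕ) := Matrix (Fin n) (Fin n) ℝ × (Fin n → ℝ)

variable {n : ℕ}

/-- `θ = (W, b)` is a Hopfield parameter: `W` is symmetric with zero diagonal. -/
def IsHopfieldParam (θ : Param n) : Prop :=
  θ.1.IsSymm ∧ ∀ i, θ.1 i i = 0

/-- `x ∈ {0,1}ⁿ`. -/
def IsBinary (x : Fin n → ℝ) : Prop := ∀ i, x i = 0 ∨ x i = 1

/-- Energy `E(x; θ) = (1/2)·xᵀWx + bᵀx`. -/
noncomputable def energy (x : Fin n → ℝ) (θ : Param n) : ℝ :=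
  (1 / 2) * (∑ i, ∑ j, x i * θ.1 i j * x j) + ∑ j, θ.2 j * x j

/-- `x^{(j)}`: the vector differing from `x` exactly in coordinate `j`. -/
noncomputable def flip (x : Fin n → ℝ) (j : Fin n) : Fin n → ℝ :=
  Function.update x j (1 - x j)

/-- The inner product on parameter space.  Under the identification of
`θ = (W, b)` with `ω = (√2·a, b) ∈ ℝ^q` (`a` the strictly upper-triangular
entries of `W`), the Euclidean inner product on `ℝ^q` corresponds to
`⟨θ, η⟩ = Σᵢⱼ Wᵢⱼ·W'ᵢⱼ + Σⱼ bⱼ·b'ⱼ`; in particular `‖ω‖² = ‖W‖_F² + ‖b‖²`. -/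
noncomputable def pInner (θ η : Param n) : ℝ :=
  (∑ i, ∑ j, θ.1 i j * η.1 i j) + ∑ j, θ.2 j * η.2 j

/-- The norm on parameter space: `‖ω‖ = √(‖W‖_F² + ‖b‖²)`. -/
noncomputable def pNorm (θ : Param n) : ℝ := Real.sqrt (pInner θ θ)

/-- The representer `u_j(x)`: the unique element of parameter space with
`⟨u_j(x), θ⟩ = E(x^{(j)}; θ) − E(x; θ)` for every Hopfield parameter `θ`. -/
noncomputable def uvec (x : Fin n → ℝ) (j : Fin n) : Param n :=
  (Matrix.of fun i l =>
      if i = j ∧ l ≠ j then (1 - 2 * x j) * x l / 2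
      else if l = j ∧ i ≠ j then (1 - 2 * x j) * x i / 2
      else 0,
   fun l => if l = j then 1 - 2 * x j else 0)

/-- `‖x‖₀`: the number of nonzero coordinates. -/
noncomputable def l0norm (x : Fin n → ℝ) : ℕ :=
  (Finset.univ.filter fun i => x i ≠ 0).card

/-- Action of a permutation matrix `Q` on parameters: `Qθ := (QᵀWQ, Qᵀb)`. -/
noncomputable def permAct (σ : Equiv.Perm (Fin n)) (θ : Param n) : Param n :=
  ((σ.permMatrix ℝ)ᵀ * θ.1 * σ.permMatrix ℝ, ((σ.permMatrix ℝ)ᵀ).mulVec θ.2)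

/-- `θ ∈ Ψ(Γ)`: `θ` is invariant under (the permutation matrices of) `Γ`. -/
noncomputable def InvariantUnder (Γ : Set (Equiv.Perm (Fin n))) (θ : Param n) : Prop :=
  ∀ σ ∈ Γ, permAct σ θ = θ

/-- `Orb(x, Γ) = {Q·x : Q ∈ Γ}` (`Q` the permutation matrix of `σ ∈ Γ`). -/
noncomputable def orb (Γ : Set (Equiv.Perm (Fin n))) (x : Fin n → ℝ) :
    Set (Fin n → ℝ) :=
  {y | ∃ σ ∈ Γ, y = ((σ.permMatrix ℝ)).mulVec x}



lemma permMatrix_mulVec' (σ : Equiv.Perm (Fin n)) (x : Fin n → ℝ) :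
    (σ.permMatrix ℝ).mulVec x = fun i => x (σ i) := by
  funext i
  simp [Matrix.mulVec, dotProduct, Equiv.Perm.permMatrix,
    PEquiv.toMatrix_apply, Equiv.toPEquiv_apply]

lemma permAct_fst (σ : Equiv.Perm (Fin n)) (θ : Param n) (i j : Fin n) :
    (permAct σ θ).1 i j = θ.1 (σ⁻¹ i) (σ⁻¹ j) := by
  have h1 : (σ.permMatrix ℝ)ᵀ = (σ⁻¹).permMatrix ℝ := by
    rw [Equiv.Perm.permMatrix, Equiv.Perm.permMatrix, ← PEquiv.toMatrix_symm,
      ← Equiv.toPEquiv_symm]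
    rfl
  simp only [permAct, h1]
  rw [Equiv.Perm.permMatrix, Equiv.Perm.permMatrix, PEquiv.toMatrix_toPEquiv_mul,
    PEquiv.mul_toMatrix_toPEquiv]
  simp [Matrix.submatrix_apply]

lemma permAct_snd (σ : Equiv.Perm (Fin n)) (θ : Param n) (i : Fin n) :
    (permAct σ θ).2 i = θ.2 (σ⁻¹ i) := by
  have h1 : (σ.permMatrix ℝ)ᵀ = (σ⁻¹).permMatrix ℝ := by
    rw [Equiv.Perm.permMatrix, Equiv.Perm.permMatrix, ← PEquiv.toMatrix_symm,
      ← Equiv.toPEquiv_symm]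
    rfl
  simp only [permAct, h1, permMatrix_mulVec']

lemma energy_combo (x : Fin n → ℝ) (θ η : Param n) (a b : ℝ) :
    energy x (a • θ + b • η) = a * energy x θ + b * energy x η := by
  have h1 : ∀ i j, x i * (a • θ + b • η).1 i j * x j
      = a * (x i * θ.1 i j * x j) + b * (x i * η.1 i j * x j) := by
    intro i j
    simp only [Prod.fst_add, Prod.smul_fst, Matrix.add_apply, Matrix.smul_apply,
      smul_eq_mul]
    ring
  have h2 : ∀ j, (a • θ + b • η).2 j * x j
      = a * (θ.2 j * x j) + b * (η.2 j * x j) := by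
    intro j
    simp only [Prod.snd_add, Prod.smul_snd, Pi.add_apply, Pi.smul_apply, smul_eq_mul]
    ring
  simp only [energy, h1, h2, Finset.sum_add_distrib, ← Finset.mul_sum]
  ring

lemma flip_comp_perm (σ : Equiv.Perm (Fin n)) (x : Fin n → ℝ) (j : Fin n) :
    (flip x j) ∘ σ = flip (x ∘ σ) (σ⁻¹ j) := by
  funext i
  simp only [Function.comp_apply, flip, Function.update]
  by_cases h : σ i = j
  · have h' : i = σ⁻¹ j := by simp [← h]
    simp [h, h']
  · have h' : ¬ i = σ⁻¹ j := fun hc => h (by simp [hc])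
    simp [h, show ¬ i = σ.symm j from h']

lemma continuous_energy (x : Fin n → ℝ) :
    Continuous fun θ : Param n => energy x θ := by
  unfold energy
  fun_prop

lemma energy_permAct (σ : Equiv.Perm (Fin n)) (θ : Param n) (x : Fin n → ℝ) :
    energy x (permAct σ θ) = energy (x ∘ σ) θ := by
  unfold energy
  congr 1
  · congr 1
    rw [← Equiv.sum_comp σ (fun i => ∑ j, x i * (permAct σ θ).1 i j * x j)]
    refine Finset.sum_congr rfl fun i _ => ?_
    rw [← Equiv.sum_comp σ (fun j => x (σ i) * (permAct σ θ).1 (σ i) j * x j)]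
    refine Finset.sum_congr rfl fun j _ => ?_
    simp [permAct_fst, Function.comp]
  · rw [← Equiv.sum_comp σ (fun j => (permAct σ θ).2 j * x j)]
    refine Finset.sum_congr rfl fun j _ => ?_
    simp [permAct_snd, Function.comp]

lemma pInner_permAct (σ : Equiv.Perm (Fin n)) (θ : Param n) :
    pInner (permAct σ θ) (permAct σ θ) = pInner θ θ := by
  unfold pInner
  congr 1
  · rw [← Equiv.sum_comp σ
      (fun i => ∑ j, (permAct σ θ).1 i j * (permAct σ θ).1 i j)]
    refine Finset.sum_congr rfl fun i _ => ?_
    rw [← Equiv.sum_comp σ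
      (fun j => (permAct σ θ).1 (σ i) j * (permAct σ θ).1 (σ i) j)]
    refine Finset.sum_congr rfl fun j _ => ?_
    simp [permAct_fst]
  · rw [← Equiv.sum_comp σ (fun j => (permAct σ θ).2 j * (permAct σ θ).2 j)]
    refine Finset.sum_congr rfl fun j _ => ?_
    simp [permAct_snd]

lemma isHopfield_permAct (σ : Equiv.Perm (Fin n)) (θ : Param n)
    (h : IsHopfieldParam θ) : IsHopfieldParam (permAct σ θ) := by
  constructor
  · exact Matrix.IsSymm.ext fun i j => by
      rw [permAct_fst, permAct_fst]; exact h.1.apply _ _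
  · intro i; rw [permAct_fst]; exact h.2 _

/-- The identification of parameter space with a Euclidean space. -/
noncomputable def eqv (n : ℕ) :
    Param n ≃ₗ[ℝ] EuclideanSpace ℝ ((Fin n × Fin n) ⊕ Fin n) where
  toFun θ := WithLp.toLp 2 (fun s => Sum.elim (fun p : Fin n × Fin n => θ.1 p.1 p.2) θ.2 s)
  map_add' θ η := by ext s; cases s <;> rfl
  map_smul' a θ := by ext s; cases s <;> rfl
  invFun v := (Matrix.of fun i j => v (Sum.inl (i, j)), fun j => v (Sum.inr j))
  left_inv θ := rfl
  right_inv v := by ext s; cases s <;> rfl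

lemma pInner_eq_inner (θ η : Param n) :
    pInner θ η = (inner ℝ (eqv n θ) (eqv n η) : ℝ) := by
  simp [pInner, eqv, PiLp.inner_apply, RCLike.inner_apply, conj_trivial,
    Fintype.sum_sum_type, Fintype.sum_prod_type, LinearEquiv.coe_mk]
  exact congrArg₂ (· + ·) (Finset.sum_congr rfl fun i _ => Finset.sum_congr rfl fun j _ =>
    mul_comm _ _) (Finset.sum_congr rfl fun j _ => mul_comm _ _)

lemma pInner_self_eq_sq (θ : Param n) : pInner θ θ = ‖eqv n θ‖ ^ 2 := by
  rw [pInner_eq_inner]; exact real_inner_self_eq_norm_sq _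


/-- Over the (nonempty) set `K` of Hopfield parameters with
all orbit energy gaps at least 1, the minimizer of `‖θ‖² = ‖W‖_F² + ‖b‖²`
exists, is unique, and is Γ-invariant. -/
theorem min_norm_orbit_memorizer_invariant {n : ℕ}
    (Γ : Subgroup (Equiv.Perm (Fin n))) (x₀ : Fin n → ℝ) (hx₀ : IsBinary x₀)
    (K : Set (Param n))
    (hK : K = {θ : Param n | IsHopfieldParam θ ∧
      ∀ x ∈ orb (Γ : Set (Equiv.Perm (Fin n))) x₀,
        ∀ j : Fin n, energy (flip x j) θ - energy x θ ≥ 1})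
    (hne : K.Nonempty) :
    (∃! θstar : Param n,
        θstar ∈ K ∧ ∀ θ ∈ K, pInner θstar θstar ≤ pInner θ θ) ∧
    (∀ θstar : Param n,
        (θstar ∈ K ∧ ∀ θ ∈ K, pInner θstar θstar ≤ pInner θ θ) →
        InvariantUnder (Γ : Set (Equiv.Perm (Fin n))) θstar) := by

  -- convexity of K
  have hKconv : Convex ℝ K := by
    rw [hK]
    intro θ hθ η hη a b ha hb hab
    refine ⟨⟨?_, ?_⟩, ?_⟩
    · refine Matrix.IsSymm.ext fun i j => ?_
      simp only [Prod.fst_add, Prod.smul_fst, Matrix.add_apply, Matrix.smul_apply,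
        smul_eq_mul]
      rw [hθ.1.1.apply, hη.1.1.apply]
    · intro i
      simp only [Prod.fst_add, Prod.smul_fst, Matrix.add_apply, Matrix.smul_apply,
        smul_eq_mul, hθ.1.2 i, hη.1.2 i]
      ring
    · intro x hx j
      have h1 := hθ.2 x hx j
      have h2 := hη.2 x hx j
      have e1 : energy (flip x j) (a • θ + b • η) - energy x (a • θ + b • η)
          = a * (energy (flip x j) θ - energy x θ)
            + b * (energy (flip x j) η - energy x η) := by
        rw [energy_combo, energy_combo]; ring
      rw [ge_iff_le, e1]
      nlinarith
  -- closedness of K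
  have hKclosed : IsClosed K := by
    have hset : K = {θ : Param n | θ.1.IsSymm} ∩
        ({θ : Param n | ∀ i, θ.1 i i = 0} ∩
          {θ : Param n | ∀ x ∈ orb (Γ : Set (Equiv.Perm (Fin n))) x₀,
            ∀ j : Fin n, energy (flip x j) θ - energy x θ ≥ 1}) := by
      rw [hK]; ext θ; simp [IsHopfieldParam, and_assoc]
    rw [hset]
    refine IsClosed.inter ?_ (IsClosed.inter ?_ ?_)
    · have h1 : {θ : Param n | θ.1.IsSymm}
          = ⋂ i, ⋂ j, {θ : Param n | θ.1 j i = θ.1 i j} := by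
        ext θ; simp [Matrix.IsSymm.ext_iff, Set.mem_iInter]
      rw [h1]
      exact isClosed_iInter fun i => isClosed_iInter fun j =>
        isClosed_eq (continuous_fst.matrix_elem _ _) (continuous_fst.matrix_elem _ _)
    · have h1 : {θ : Param n | ∀ i, θ.1 i i = 0}
          = ⋂ i, {θ : Param n | θ.1 i i = 0} := by
        ext θ; simp [Set.mem_iInter]
      rw [h1]
      exact isClosed_iInter fun i =>
        isClosed_eq (continuous_fst.matrix_elem _ _) continuous_const
    · have h1 : {θ : Param n | ∀ x ∈ orb (Γ : Set (Equiv.Perm (Fin n))) x₀,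
            ∀ j : Fin n, energy (flip x j) θ - energy x θ ≥ 1}
          = ⋂ x ∈ orb (Γ : Set (Equiv.Perm (Fin n))) x₀, ⋂ j : Fin n,
              {θ : Param n | 1 ≤ energy (flip x j) θ - energy x θ} := by
        ext θ; simp [Set.mem_iInter, ge_iff_le]
      rw [h1]
      exact isClosed_biInter fun x hx => isClosed_iInter fun j =>
        isClosed_le continuous_const ((continuous_energy _).sub (continuous_energy _))
  -- transport to Euclidean space
  have hcont' : Continuous (eqv n).symm :=
    (eqv n).symm.toLinearMap.continuous_of_finiteDimensional
  set K' : Set (EuclideanSpace ℝ ((Fin n × Fin n) ⊕ Fin n)) := (eqv n) '' K with hK'def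
  have hK'ne : K'.Nonempty := hne.image _
  have hK'conv : Convex ℝ K' := hKconv.linear_image (eqv n).toLinearMap
  have hK'closed : IsClosed K' := by
    have h1 : K' = (eqv n).symm ⁻¹' K := by
      ext v
      constructor
      · rintro ⟨θ, hθ, rfl⟩; simpa using hθ
      · intro hv; exact ⟨(eqv n).symm v, hv, by simp⟩
    rw [h1]
    exact hKclosed.preimage hcont'
  obtain ⟨v, hvK', hv⟩ :=
    exists_norm_eq_iInf_of_complete_convex hK'ne hK'closed.isComplete hK'conv 0
  haveI : Nonempty K' := hK'ne.to_subtype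
  have hmin' : ∀ w ∈ K', ‖v‖ ≤ ‖w‖ := by
    intro w hw
    have h1 : (⨅ w : K', ‖(0 : EuclideanSpace ℝ ((Fin n × Fin n) ⊕ Fin n)) - w‖)
        ≤ ‖(0 : EuclideanSpace ℝ ((Fin n × Fin n) ⊕ Fin n)) - w‖ :=
      ciInf_le ⟨0, fun y hy => by obtain ⟨z, rfl⟩ := hy; exact norm_nonneg _⟩
        (⟨w, hw⟩ : K')
    rw [← hv] at h1
    simpa using h1
  obtain ⟨θv, hθvK, hveq⟩ := hvK'
  have hminv : ∀ θ ∈ K, pInner θv θv ≤ pInner θ θ := by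
    intro θ hθ
    rw [pInner_self_eq_sq, pInner_self_eq_sq, hveq]
    exact pow_le_pow_left₀ (norm_nonneg _) (hmin' _ ⟨θ, hθ, rfl⟩) 2
  -- uniqueness of the minimizer
  have huniq : ∀ θ₁ θ₂ : Param n,
      (θ₁ ∈ K ∧ ∀ θ ∈ K, pInner θ₁ θ₁ ≤ pInner θ θ) →
      (θ₂ ∈ K ∧ ∀ θ ∈ K, pInner θ₂ θ₂ ≤ pInner θ θ) → θ₁ = θ₂ := by
    rintro θ₁ θ₂ ⟨h₁K, h₁⟩ ⟨h₂K, h₂⟩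
    have hmem : (1/2 : ℝ) • θ₁ + (1/2 : ℝ) • θ₂ ∈ K :=
      hKconv h₁K h₂K (by norm_num) (by norm_num) (by norm_num)
    have e12 : pInner θ₁ θ₁ = pInner θ₂ θ₂ := le_antisymm (h₁ _ h₂K) (h₂ _ h₁K)
    have hm := h₁ _ hmem
    have hmid : eqv n ((1/2 : ℝ) • θ₁ + (1/2 : ℝ) • θ₂)
        = (1/2 : ℝ) • (eqv n θ₁ + eqv n θ₂) := by
      rw [map_add, LinearEquiv.map_smul, LinearEquiv.map_smul, smul_add]
    rw [pInner_self_eq_sq, pInner_self_eq_sq, hmid] at hm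
    rw [pInner_self_eq_sq, pInner_self_eq_sq] at e12
    have hpar := parallelogram_law_with_norm ℝ (eqv n θ₁) (eqv n θ₂)
    have hnm : ‖(1/2 : ℝ) • (eqv n θ₁ + eqv n θ₂)‖
        = (1/2 : ℝ) * ‖eqv n θ₁ + eqv n θ₂‖ := by
      rw [norm_smul]; simp
    rw [hnm] at hm
    have hx2 : ‖eqv n θ₁ - eqv n θ₂‖ ^ 2 ≤ 0 := by nlinarith
    have hx0 : ‖eqv n θ₁ - eqv n θ₂‖ = 0 := by
      have := sq_nonneg ‖eqv n θ₁ - eqv n θ₂‖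
      nlinarith [norm_nonneg (eqv n θ₁ - eqv n θ₂)]
    have : eqv n θ₁ = eqv n θ₂ := by rwa [norm_eq_zero, sub_eq_zero] at hx0
    exact (eqv n).injective this
  -- the orbit is closed under composition with elements of Γ
  have horb : ∀ σ ∈ (Γ : Set (Equiv.Perm (Fin n))),
      ∀ x ∈ orb (Γ : Set (Equiv.Perm (Fin n))) x₀,
        x ∘ σ ∈ orb (Γ : Set (Equiv.Perm (Fin n))) x₀ := by
    rintro σ hσ x ⟨τ, hτ, rfl⟩
    refine ⟨τ * σ, mul_mem hτ hσ, ?_⟩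
    funext i
    simp [← Matrix.mulVec_mulVec, permMatrix_mulVec', Equiv.Perm.mul_apply]
  -- K is stable under permAct by elements of Γ
  have hperm : ∀ σ ∈ (Γ : Set (Equiv.Perm (Fin n))),
      ∀ θ ∈ K, permAct σ θ ∈ K := by
    intro σ hσ θ hθ
    rw [hK] at hθ ⊢
    refine ⟨isHopfield_permAct σ θ hθ.1, ?_⟩
    intro x hx j
    rw [energy_permAct, energy_permAct, flip_comp_perm]
    exact hθ.2 (x ∘ σ) (horb σ hσ x hx) (σ⁻¹ j)
  refine ⟨⟨θv, ⟨hθvK, hminv⟩, fun y hy => huniq y θv hy ⟨hθvK, hminv⟩⟩, ?_⟩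
  intro θstar hθs σ hσ
  have hη : permAct σ θstar ∈ K := hperm σ hσ θstar hθs.1
  have hηmin : ∀ θ ∈ K, pInner (permAct σ θstar) (permAct σ θstar) ≤ pInner θ θ := by
    intro θ hθ
    rw [pInner_permAct]
    exact hθs.2 θ hθ
  exact huniq _ _ ⟨hη, hηmin⟩ hθs

end HopfieldPaper
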